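/- Let k ≥ 80 be an integer with k ≡ 2 (mod 4), let w = k − 2, and let a : ℕ → ℝ satisfy a(1) = 1 and |a(n)| ≤ d(n)·n^{(k−1)/2} for all n ≥ 1, where d(n) is the number of divisors of n. For real σ > (k+1)/2 set L(σ) = Σ_{n=1}^∞ a(n)·n^{−σ}, and define q(z) = Σ_{m=0}^{⌊(w−6)/4⌋} (−1)^m · (2πz)^{2m+1}/(2m+1)! · L(w − 2m). Then for every complex z with |z| ≤ 5/4 one has |sin(2πz) − q(z)| ≤ 1/100. -/

import Mathlib

open Real

private lemma tele_sum_le (n : ℕ) :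
    ∑ i ∈ Finset.range n, (1:ℝ)/(((i:ℝ)+1)*((i:ℝ)+2)) ≤ 1 := by
  have h : ∀ i ∈ Finset.range n, (1:ℝ)/(((i:ℝ)+1)*((i:ℝ)+2))
      = (fun j : ℕ => 1/((j:ℝ)+1)) i - (fun j : ℕ => 1/((j:ℝ)+1)) (i+1) := by
    intro i _
    have h1 : ((i:ℝ)+1) ≠ 0 := by positivity
    have h2 : ((i:ℝ)+2) ≠ 0 := by positivity
    push_cast
    field_simp
    ring_nf
  rw [Finset.sum_congr rfl h, Finset.sum_range_sub']
  have : (0:ℝ) ≤ 1/((n:ℝ)+1) := by positivity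
  norm_num
  linarith

private lemma rpow_tail_bound (e : ℝ) (he : e ≤ -(5/2)) :
    Summable (fun n : ℕ => ((n:ℝ)+2) ^ e) ∧
      ∑' n : ℕ, ((n:ℝ)+2) ^ e ≤ (2:ℝ) ^ (e + 5/2) := by
  have key : ∀ n : ℕ, ((n:ℝ)+2) ^ e ≤ (2:ℝ)^(e+5/2) * ((1:ℝ)/(((n:ℝ)+1)*((n:ℝ)+2))) := by
    intro n
    have hn0 : (0:ℝ) ≤ (n:ℝ) := Nat.cast_nonneg n
    have h2 : (2:ℝ) ≤ (n:ℝ)+2 := by linarith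
    have hpos : (0:ℝ) < (n:ℝ)+2 := by linarith
    have step1 : ((n:ℝ)+2) ^ e = ((n:ℝ)+2)^(e+5/2) * ((n:ℝ)+2)^(-(5/2):ℝ) := by
      rw [← Real.rpow_add hpos]; ring_nf
    have b1 : ((n:ℝ)+2)^(e+5/2) ≤ (2:ℝ)^(e+5/2) :=
      Real.rpow_le_rpow_of_nonpos zero_lt_two h2 (by linarith)
    have b2 : ((n:ℝ)+2)^(-(5/2):ℝ) ≤ (1:ℝ)/(((n:ℝ)+1)*((n:ℝ)+2)) := by
      have b2a : ((n:ℝ)+2)^(-(5/2):ℝ) ≤ ((n:ℝ)+2)^(-(2:ℝ)) :=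
        Real.rpow_le_rpow_of_exponent_le (by linarith) (by norm_num)
      have b2b : ((n:ℝ)+2)^(-(2:ℝ)) = (((n:ℝ)+2)^(2:ℕ))⁻¹ := by
        rw [Real.rpow_neg hpos.le, ← Real.rpow_natCast ((n:ℝ)+2) 2]
        norm_num
      have b2c : (((n:ℝ)+2)^(2:ℕ))⁻¹ ≤ (1:ℝ)/(((n:ℝ)+1)*((n:ℝ)+2)) := by
        rw [one_div]
        apply inv_anti₀
        · positivity
        · nlinarith
      calc ((n:ℝ)+2)^(-(5/2):ℝ) ≤ ((n:ℝ)+2)^(-(2:ℝ)) := b2a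
        _ = (((n:ℝ)+2)^(2:ℕ))⁻¹ := b2b
        _ ≤ _ := b2c
    calc ((n:ℝ)+2) ^ e = ((n:ℝ)+2)^(e+5/2) * ((n:ℝ)+2)^(-(5/2):ℝ) := step1
      _ ≤ (2:ℝ)^(e+5/2) * ((1:ℝ)/(((n:ℝ)+1)*((n:ℝ)+2))) := by
          apply mul_le_mul b1 b2 (Real.rpow_nonneg hpos.le _) (Real.rpow_nonneg (by norm_num) _)
  have hnn : ∀ n : ℕ, (0:ℝ) ≤ ((n:ℝ)+2) ^ e := fun n =>
    Real.rpow_nonneg (by positivity) _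
  have hpow2 : (0:ℝ) ≤ (2:ℝ)^(e+5/2) := Real.rpow_nonneg (by norm_num) _
  have hsumle : ∀ n : ℕ, ∑ i ∈ Finset.range n, ((i:ℝ)+2) ^ e ≤ (2:ℝ)^(e+5/2) := by
    intro n
    calc ∑ i ∈ Finset.range n, ((i:ℝ)+2) ^ e
        ≤ ∑ i ∈ Finset.range n, (2:ℝ)^(e+5/2) * ((1:ℝ)/(((i:ℝ)+1)*((i:ℝ)+2))) :=
          Finset.sum_le_sum (fun i _ => key i)
      _ = (2:ℝ)^(e+5/2) * ∑ i ∈ Finset.range n, (1:ℝ)/(((i:ℝ)+1)*((i:ℝ)+2)) := by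
          rw [Finset.mul_sum]
      _ ≤ (2:ℝ)^(e+5/2) * 1 := by
          apply mul_le_mul_of_nonneg_left (tele_sum_le n) hpow2
      _ = (2:ℝ)^(e+5/2) := mul_one _
  exact ⟨summable_of_sum_range_le hnn hsumle, Real.tsum_le_of_sum_range_le hnn hsumle⟩

private lemma odd_exp_sum_le (n : ℕ) :
    ∑ m ∈ Finset.range n, (16:ℝ)^(2*m+1)/((2*m+1).factorial : ℝ) ≤ Real.exp 16 := by
  have inj : ∀ x ∈ Finset.range n, ∀ y ∈ Finset.range n, 2*x+1 = 2*y+1 → x = y := by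
    intro x _ y _ h; omega
  have himg : ∑ j ∈ (Finset.range n).image (fun m => 2*m+1), (16:ℝ)^j/(j.factorial : ℝ)
      = ∑ m ∈ Finset.range n, (16:ℝ)^(2*m+1)/((2*m+1).factorial : ℝ) :=
    Finset.sum_image inj
  rw [← himg]
  have hsub : (Finset.range n).image (fun m => 2*m+1) ⊆ Finset.range (2*n+1) := by
    intro j hj
    simp only [Finset.mem_image, Finset.mem_range] at hj ⊢
    omega
  calc ∑ j ∈ (Finset.range n).image (fun m => 2*m+1), (16:ℝ)^j/(j.factorial : ℝ)
      ≤ ∑ j ∈ Finset.range (2*n+1), (16:ℝ)^j/(j.factorial : ℝ) :=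
        Finset.sum_le_sum_of_subset_of_nonneg hsub (fun j _ _ => by positivity)
    _ ≤ Real.exp 16 := Real.sum_le_exp_of_nonneg (by norm_num) _

private lemma odd_exp_summable :
    Summable (fun m : ℕ => (16:ℝ)^(2*m+1)/((2*m+1).factorial : ℝ)) :=
  summable_of_sum_range_le (fun m => by positivity) odd_exp_sum_le

private lemma odd_exp_tsum_le :
    ∑' m : ℕ, (16:ℝ)^(2*m+1)/((2*m+1).factorial : ℝ) ≤ Real.exp 16 :=
  Real.tsum_le_of_sum_range_le (fun m => by positivity) odd_exp_sum_le

private lemma card_divisors_le (n : ℕ) : (n.divisors.card : ℝ) ≤ (n : ℝ) := by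
  have h : n.divisors ⊆ Finset.Icc 1 n := by
    intro d hd
    rw [Finset.mem_Icc]
    exact ⟨Nat.pos_of_mem_divisors hd, Nat.divisor_le hd⟩
  have h2 := Finset.card_le_card h
  rw [Nat.card_Icc] at h2
  have h3 : n + 1 - 1 = n := by omega
  rw [h3] at h2
  exact_mod_cast h2

private lemma pow_arith (m : ℕ) :
    (8:ℝ)^(2*m+1) * (4:ℝ)^m = (1/2) * (16:ℝ)^(2*m+1) := by
  have h16 : (16:ℝ)^(2*m+1) = 8^(2*m+1) * 2^(2*m+1) := by
    rw [← mul_pow]; norm_num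
  have h2 : (2:ℝ)^(2*m+1) = 2 * 4^m := by
    rw [pow_succ, pow_mul]
    norm_num
    ring
  rw [h16, h2]
  ring

set_option maxHeartbeats 8000000 in
theorem q_close_to_sin
    (k : ℕ) (hk : 80 ≤ k) (hk4 : k % 4 = 2)
    (a : ℕ → ℝ) (ha1 : a 1 = 1)
    (hbd : ∀ n : ℕ, 1 ≤ n →
      |a n| ≤ (n.divisors.card : ℝ) * (n : ℝ) ^ (((k : ℝ) - 1) / 2))
    (L : ℝ → ℝ)
    (hL : ∀ σ : ℝ, ((k : ℝ) + 1) / 2 < σ →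
      L σ = ∑' n : ℕ, a (n + 1) / ((n : ℝ) + 1) ^ σ)
    (q : ℂ → ℂ)
    (hq : ∀ z : ℂ, q z = ∑ m ∈ Finset.range ((k - 2 - 6) / 4 + 1),
      (-1) ^ m * (2 * (π : ℂ) * z) ^ (2 * m + 1) / ((2 * m + 1).factorial : ℂ)
        * ((L ((k - 2 - 2 * m : ℕ) : ℝ) : ℂ))) :
    ∀ z : ℂ, ‖z‖ ≤ 5 / 4 →
      ‖Complex.sin (2 * (π : ℂ) * z) - q z‖ ≤ 1 / 100 := by
  intro z hz
  obtain ⟨t, ht, ht20⟩ : ∃ t, k = 4*t+2 ∧ 20 ≤ t := ⟨k/4, by omega, by omega⟩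
  set M := (k - 2 - 6) / 4 with hMdef
  have hMt : M = t - 2 := by omega
  have hM18 : 18 ≤ M := by omega
  have hMR : (M:ℝ) = (t:ℝ) - 2 := by
    rw [hMt, Nat.cast_sub (by omega)]; norm_num
  have hkR : (k:ℝ) = 4*(t:ℝ) + 2 := by rw [ht]; push_cast; ring
  set X := 2 * (π : ℂ) * z with hX
  -- bound on |X|
  have hXabs : ‖X‖ ≤ 8 := by
    rw [hX, norm_mul, norm_mul]
    have h2 : ‖(2:ℂ)‖ = 2 := by norm_num
    have hp : ‖(π:ℂ)‖ = π := by
      rw [Complex.norm_real, Real.norm_eq_abs, abs_of_pos Real.pi_pos]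
    rw [h2, hp]
    have hπ : π < 3.15 := by
      have := Real.pi_lt_d2
      linarith
    nlinarith [norm_nonneg z, Real.pi_pos]
  -- the L bound
  have hLbd : ∀ m : ℕ, m ≤ M → |L ((k - 2 - 2*m : ℕ) : ℝ) - 1| ≤ ((1:ℝ)/4)^(M - m) := by
    intro m hm
    have hmR : (m:ℝ) ≤ (M:ℝ) := Nat.cast_le.mpr hm
    set σ : ℝ := ((k - 2 - 2*m : ℕ) : ℝ) with hσdef
    have hσval : σ = (k:ℝ) - 2 - 2*(m:ℝ) := by
      rw [hσdef]
      have hh : k - 2 - 2*m = k - (2+2*m) := by omega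
      rw [hh, Nat.cast_sub (by omega)]
      push_cast; ring
    have hσgt : ((k:ℝ)+1)/2 < σ := by
      rw [hσval]; rw [hkR] at *; linarith [hMR ▸ hmR]
    set e : ℝ := ((k:ℝ)+1)/2 - σ with hedef
    have he : e ≤ -(5/2) := by
      rw [hedef, hσval, hkR]
      have : (m:ℝ) ≤ (t:ℝ) - 2 := by rw [← hMR]; exact hmR
      linarith
    -- pointwise bound on terms
    have hterm : ∀ n : ℕ, |a (n+1) / ((n:ℝ)+1) ^ σ| ≤ ((n:ℝ)+1) ^ e := by
      intro n
      have hb : (0:ℝ) < ((n:ℝ)+1) := by positivity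
      have hd : |a (n+1)| ≤ ((n:ℝ)+1) ^ (((k:ℝ)+1)/2) := by
        have h1 := hbd (n+1) (by omega)
        have h2 : ((n+1 : ℕ) : ℝ) = (n:ℝ)+1 := by push_cast; ring
        rw [h2] at h1
        have h3 : ((n+1 : ℕ).divisors.card : ℝ) ≤ (n:ℝ)+1 := by
          have := card_divisors_le (n+1)
          rwa [h2] at this
        calc |a (n+1)| ≤ ((n+1 : ℕ).divisors.card : ℝ) * ((n:ℝ)+1) ^ (((k:ℝ)-1)/2) := h1
          _ ≤ ((n:ℝ)+1) * ((n:ℝ)+1) ^ (((k:ℝ)-1)/2) := by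
              apply mul_le_mul_of_nonneg_right h3 (Real.rpow_nonneg hb.le _)
          _ = ((n:ℝ)+1) ^ (1:ℝ) * ((n:ℝ)+1) ^ (((k:ℝ)-1)/2) := by
              rw [Real.rpow_one]
          _ = ((n:ℝ)+1) ^ (((k:ℝ)+1)/2) := by
              rw [← Real.rpow_add hb]; ring_nf
      rw [abs_div, abs_of_pos (Real.rpow_pos_of_pos hb σ)]
      rw [div_le_iff₀ (Real.rpow_pos_of_pos hb σ)]
      calc |a (n+1)| ≤ ((n:ℝ)+1) ^ (((k:ℝ)+1)/2) := hd
        _ = ((n:ℝ)+1) ^ e * ((n:ℝ)+1) ^ σ := by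
            rw [← Real.rpow_add hb, hedef]; ring_nf
    -- summability of the dominating series
    have hshift : ∀ n : ℕ, (((n+1:ℕ) : ℝ)+1) ^ e = ((n:ℝ)+2) ^ e := by
      intro n; push_cast; ring_nf
    have hdom2 := rpow_tail_bound e he
    have hdomsum : Summable (fun n : ℕ => ((n:ℝ)+1) ^ e) := by
      rw [← summable_nat_add_iff 1]
      refine hdom2.1.congr (fun n => ?_)
      rw [← hshift n]
    have hg : Summable (fun n : ℕ => a (n+1) / ((n:ℝ)+1) ^ σ) := by
      apply Summable.of_norm_bounded hdomsum
      intro n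
      exact hterm n
    -- split off first term
    rw [hL σ hσgt, Summable.tsum_eq_zero_add hg]
    have h0 : a (0+1) / (((0:ℕ):ℝ)+1) ^ σ = 1 := by
      simp [ha1, Real.one_rpow]
    rw [h0]
    have habs : |1 + ∑' n : ℕ, a (n+1+1) / (((n+1:ℕ):ℝ)+1) ^ σ - 1|
        = |∑' n : ℕ, a (n+1+1) / (((n+1:ℕ):ℝ)+1) ^ σ| := by
      congr 1; ring
    rw [habs]
    have hgs : Summable (fun n : ℕ => a (n+1+1) / (((n+1:ℕ):ℝ)+1) ^ σ) := by
      exact (summable_nat_add_iff 1).mpr hg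
    have hgsabs : Summable (fun n : ℕ => |a (n+1+1) / (((n+1:ℕ):ℝ)+1) ^ σ|) := by
      have hh := summable_norm_iff.mpr hgs
      simpa only [Real.norm_eq_abs] using hh
    calc |∑' n : ℕ, a (n+1+1) / (((n+1:ℕ):ℝ)+1) ^ σ|
        ≤ ∑' n : ℕ, |a (n+1+1) / (((n+1:ℕ):ℝ)+1) ^ σ| := by
          have hh := norm_tsum_le_tsum_norm (f := fun n : ℕ => a (n+1+1) / (((n+1:ℕ):ℝ)+1) ^ σ)
            (by simpa only [Real.norm_eq_abs] using hgsabs)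
          simpa only [Real.norm_eq_abs] using hh
      _ ≤ ∑' n : ℕ, ((n:ℝ)+2) ^ e := by
          apply Summable.tsum_le_tsum _ hgsabs hdom2.1
          intro n
          have := hterm (n+1)
          rwa [hshift n] at this
      _ ≤ (2:ℝ) ^ (e + 5/2) := hdom2.2
      _ = ((1:ℝ)/4)^(M - m) := by
          have hMm : ((M - m : ℕ) : ℝ) = (M:ℝ) - (m:ℝ) := by
            rw [Nat.cast_sub hm]
          have hexp : e + 5/2 = (-2:ℝ) * ((M - m : ℕ):ℝ) := by
            rw [hMm, hedef, hσval, hkR, hMR]; ring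
          rw [hexp, Real.rpow_mul (by norm_num : (0:ℝ) ≤ 2), Real.rpow_natCast]
          congr 1
          rw [show (-2:ℝ) = ((-2:ℤ):ℝ) by norm_num, Real.rpow_intCast]
          norm_num
  -- main assembly
  set f : ℕ → ℂ := fun m => (-1)^m * X^(2*m+1)/((2*m+1).factorial : ℂ) with hf
  have hsin : HasSum f (Complex.sin X) := Complex.hasSum_sin X
  have hsplit : ∑ m ∈ Finset.range (M+1), f m + ∑' i : ℕ, f (i + (M+1)) = Complex.sin X := by
    rw [hsin.summable.sum_add_tsum_nat_add (M+1), hsin.tsum_eq]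
  have hqz : q z = ∑ m ∈ Finset.range (M+1), f m * ((L ((k - 2 - 2*m : ℕ) : ℝ) : ℂ)) := by
    rw [hq z]
  have hdiff : Complex.sin X - q z
      = ∑' i : ℕ, f (i + (M+1))
        + ∑ m ∈ Finset.range (M+1), f m * (1 - ((L ((k - 2 - 2*m : ℕ) : ℝ) : ℂ))) := by
    rw [hqz, ← hsplit]
    have hss : ∑ m ∈ Finset.range (M+1), f m * (1 - ((L ((k - 2 - 2*m : ℕ) : ℝ) : ℂ)))
        = ∑ m ∈ Finset.range (M+1), f m
          - ∑ m ∈ Finset.range (M+1), f m * ((L ((k - 2 - 2*m : ℕ) : ℝ) : ℂ)) := by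
      rw [← Finset.sum_sub_distrib]
      apply Finset.sum_congr rfl
      intro m _
      ring
    rw [hss]
    ring
  rw [hdiff]
  -- bound the terms of f
  have hfabs : ∀ m : ℕ, ‖f m‖ ≤ (8:ℝ)^(2*m+1)/((2*m+1).factorial : ℝ) := by
    intro m
    rw [hf]
    simp only [norm_div, norm_mul, norm_pow, norm_neg, norm_one, one_pow, one_mul]
    rw [Complex.norm_natCast]
    apply div_le_div_of_nonneg_right ?_ (by positivity)
    · exact pow_le_pow_left₀ (norm_nonneg X) hXabs _
  -- rewrite 8^(2m+1) in terms of 16^(2m+1)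
  have hpow8 : ∀ m : ℕ, (8:ℝ)^(2*m+1) = (1/2) * ((1/4:ℝ)^m * (16:ℝ)^(2*m+1)) := by
    intro m
    have h := pow_arith m
    have h4 : (0:ℝ) < (4:ℝ)^m := by positivity
    have h14 : ((1:ℝ)/4)^m = ((4:ℝ)^m)⁻¹ := by
      rw [one_div, inv_pow]
    rw [h14]
    field_simp
    linarith [h]
  have hfabs2 : ∀ m : ℕ, ‖f m‖
      ≤ (1/2) * ((1/4:ℝ)^m * ((16:ℝ)^(2*m+1)/((2*m+1).factorial : ℝ))) := by
    intro m
    calc ‖f m‖ ≤ (8:ℝ)^(2*m+1)/((2*m+1).factorial : ℝ) := hfabs m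
      _ = (1/2) * ((1/4:ℝ)^m * ((16:ℝ)^(2*m+1)/((2*m+1).factorial : ℝ))) := by
          rw [hpow8 m]; ring
  -- summability of |f|
  have habsfs : Summable (fun m : ℕ => ‖f m‖) := by
    apply Summable.of_nonneg_of_le (fun m => norm_nonneg _) _ odd_exp_summable
    intro m
    calc ‖f m‖ ≤ (1/2) * ((1/4:ℝ)^m * ((16:ℝ)^(2*m+1)/((2*m+1).factorial : ℝ))) :=
          hfabs2 m
      _ ≤ (16:ℝ)^(2*m+1)/((2*m+1).factorial : ℝ) := by
          have h1 : ((1:ℝ)/4)^m ≤ 1 := pow_le_one₀ (by norm_num) (by norm_num)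
          have h2 : (0:ℝ) ≤ (16:ℝ)^(2*m+1)/((2*m+1).factorial : ℝ) := by positivity
          nlinarith
  -- tail bound
  have hshift_sum : Summable (fun i : ℕ => ‖f (i + (M+1))‖) :=
    (summable_nat_add_iff (M+1)).mpr habsfs
  have hgdom : Summable (fun i : ℕ =>
      (16:ℝ)^(2*(i+(M+1))+1)/((2*(i+(M+1))+1).factorial : ℝ)) :=
    (summable_nat_add_iff (M+1)).mpr odd_exp_summable
  have hgtail_le : ∑' i : ℕ, (16:ℝ)^(2*(i+(M+1))+1)/((2*(i+(M+1))+1).factorial : ℝ)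
      ≤ Real.exp 16 := by
    have hsplit2 := odd_exp_summable.sum_add_tsum_nat_add (f := fun m : ℕ =>
      (16:ℝ)^(2*m+1)/((2*m+1).factorial : ℝ)) (M+1)
    have hhead : (0:ℝ) ≤ ∑ m ∈ Finset.range (M+1), (16:ℝ)^(2*m+1)/((2*m+1).factorial : ℝ) := by
      apply Finset.sum_nonneg; intro m _; positivity
    linarith [odd_exp_tsum_le, hsplit2.le, hsplit2.ge]
  have htail : ‖∑' i : ℕ, f (i + (M+1))‖
      ≤ (1/4:ℝ)^(M+1) * ((1/2) * Real.exp 16) := by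
    have h1 : ‖∑' i : ℕ, f (i + (M+1))‖
        ≤ ∑' i : ℕ, ‖f (i + (M+1))‖ := by
      have hh := norm_tsum_le_tsum_norm (f := fun i : ℕ => f (i + (M+1)))
        (by exact hshift_sum)
      exact hh
    have hpt : ∀ i : ℕ, ‖f (i + (M+1))‖
        ≤ (1/4:ℝ)^(M+1) * ((1/2) *
          ((16:ℝ)^(2*(i+(M+1))+1)/((2*(i+(M+1))+1).factorial : ℝ))) := by
      intro i
      have h14 : ((1:ℝ)/4)^(i+(M+1)) ≤ ((1:ℝ)/4)^(M+1) :=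
        pow_le_pow_of_le_one (by norm_num) (by norm_num) (by omega)
      have hG : (0:ℝ) ≤ (16:ℝ)^(2*(i+(M+1))+1)/((2*(i+(M+1))+1).factorial : ℝ) := by
        positivity
      calc ‖f (i + (M+1))‖
          ≤ (1/2) * ((1/4:ℝ)^(i+(M+1)) *
            ((16:ℝ)^(2*(i+(M+1))+1)/((2*(i+(M+1))+1).factorial : ℝ))) := hfabs2 _
        _ ≤ (1/2) * ((1/4:ℝ)^(M+1) *
            ((16:ℝ)^(2*(i+(M+1))+1)/((2*(i+(M+1))+1).factorial : ℝ))) := by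
            apply mul_le_mul_of_nonneg_left _ (by norm_num)
            exact mul_le_mul_of_nonneg_right h14 hG
        _ = (1/4:ℝ)^(M+1) * ((1/2) *
            ((16:ℝ)^(2*(i+(M+1))+1)/((2*(i+(M+1))+1).factorial : ℝ))) := by ring
    have h2 : ∑' i : ℕ, ‖f (i + (M+1))‖
        ≤ ∑' i : ℕ, (1/4:ℝ)^(M+1) * ((1/2) *
          ((16:ℝ)^(2*(i+(M+1))+1)/((2*(i+(M+1))+1).factorial : ℝ))) := by
      apply Summable.tsum_le_tsum hpt hshift_sum
      apply Summable.mul_left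
      exact hgdom.mul_left _
    have h3 : ∑' i : ℕ, (1/4:ℝ)^(M+1) * ((1/2) *
          ((16:ℝ)^(2*(i+(M+1))+1)/((2*(i+(M+1))+1).factorial : ℝ)))
        = (1/4:ℝ)^(M+1) * ((1/2) *
          ∑' i : ℕ, (16:ℝ)^(2*(i+(M+1))+1)/((2*(i+(M+1))+1).factorial : ℝ)) := by
      rw [tsum_mul_left, tsum_mul_left]
    have h4 : (1/4:ℝ)^(M+1) * ((1/2) *
          ∑' i : ℕ, (16:ℝ)^(2*(i+(M+1))+1)/((2*(i+(M+1))+1).factorial : ℝ))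
        ≤ (1/4:ℝ)^(M+1) * ((1/2) * Real.exp 16) := by
      apply mul_le_mul_of_nonneg_left _ (by positivity)
      apply mul_le_mul_of_nonneg_left hgtail_le (by norm_num)
    linarith [h1, h2, h3.le, h3.ge, h4]
  -- finite sum bound
  have hsumbd : ‖∑ m ∈ Finset.range (M+1),
        f m * (1 - ((L ((k - 2 - 2*m : ℕ) : ℝ) : ℂ)))‖
      ≤ (1/4:ℝ)^M * ((1/2) * Real.exp 16) := by
    calc ‖∑ m ∈ Finset.range (M+1),
          f m * (1 - ((L ((k - 2 - 2*m : ℕ) : ℝ) : ℂ)))‖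
        ≤ ∑ m ∈ Finset.range (M+1),
            ‖f m * (1 - ((L ((k - 2 - 2*m : ℕ) : ℝ) : ℂ)))‖ := by
          have hh := norm_sum_le (Finset.range (M+1))
            (fun m => f m * (1 - ((L ((k - 2 - 2*m : ℕ) : ℝ) : ℂ))))
          exact hh
      _ ≤ ∑ m ∈ Finset.range (M+1),
            (1/4:ℝ)^M * ((1/2) * ((16:ℝ)^(2*m+1)/((2*m+1).factorial : ℝ))) := by
          apply Finset.sum_le_sum
          intro m hm
          rw [Finset.mem_range] at hm
          have hmM : m ≤ M := by omega
          rw [norm_mul]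
          have hL1 : ‖1 - ((L ((k - 2 - 2*m : ℕ) : ℝ) : ℂ))‖
              ≤ ((1:ℝ)/4)^(M - m) := by
            have hcast : (1 : ℂ) - ((L ((k - 2 - 2*m : ℕ) : ℝ) : ℂ))
                = (((1 - L ((k - 2 - 2*m : ℕ) : ℝ) : ℝ)) : ℂ) := by push_cast; ring
            rw [hcast, Complex.norm_real, Real.norm_eq_abs, abs_sub_comm]
            exact hLbd m hmM
          have hfm := hfabs m
          have h14m : ((1:ℝ)/4)^(M-m) = ((1:ℝ)/4)^M / ((1:ℝ)/4)^m :=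
            pow_sub₀ _ (by norm_num) hmM
          calc ‖f m‖ * ‖1 - ((L ((k - 2 - 2*m : ℕ) : ℝ) : ℂ))‖
              ≤ ((8:ℝ)^(2*m+1)/((2*m+1).factorial : ℝ)) * ((1:ℝ)/4)^(M - m) := by
                apply mul_le_mul hfm hL1 (norm_nonneg _) (by positivity)
            _ = (1/4:ℝ)^M * ((1/2) * ((16:ℝ)^(2*m+1)/((2*m+1).factorial : ℝ))) := by
                rw [h14m, hpow8 m]
                have h4 : ((1:ℝ)/4)^m ≠ 0 := by positivity
                field_simp
      _ = (1/4:ℝ)^M * ((1/2) *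
            ∑ m ∈ Finset.range (M+1), (16:ℝ)^(2*m+1)/((2*m+1).factorial : ℝ)) := by
          rw [← Finset.mul_sum, ← Finset.mul_sum]
      _ ≤ (1/4:ℝ)^M * ((1/2) * Real.exp 16) := by
          apply mul_le_mul_of_nonneg_left _ (by positivity)
          apply mul_le_mul_of_nonneg_left (odd_exp_sum_le (M+1)) (by norm_num)
  -- final numeric computation
  have hexp16 : Real.exp 16 ≤ 43046721 := by
    have h1 : Real.exp (16:ℕ) = Real.exp 1 ^ (16:ℕ) := (Real.exp_one_pow 16).symm
    have h2 : Real.exp 1 ≤ 3 := by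
      have := Real.exp_one_lt_d9
      linarith
    have h3 : Real.exp 1 ^ (16:ℕ) ≤ (3:ℝ)^(16:ℕ) :=
      pow_le_pow_left₀ (Real.exp_pos 1).le h2 16
    have h4 : ((16:ℕ):ℝ) = (16:ℝ) := by norm_num
    rw [h4] at h1
    calc Real.exp 16 = Real.exp 1 ^ (16:ℕ) := h1
      _ ≤ (3:ℝ)^(16:ℕ) := h3
      _ = 43046721 := by norm_num
  have hM14 : ((1:ℝ)/4)^M ≤ ((1:ℝ)/4)^18 :=
    pow_le_pow_of_le_one (by norm_num) (by norm_num) hM18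
  have hM14' : ((1:ℝ)/4)^(M+1) ≤ ((1:ℝ)/4)^18 :=
    pow_le_pow_of_le_one (by norm_num) (by norm_num) (by omega)
  have hexpnn : (0:ℝ) ≤ Real.exp 16 := (Real.exp_pos 16).le
  calc ‖∑' i : ℕ, f (i + (M+1))
        + ∑ m ∈ Finset.range (M+1), f m * (1 - ((L ((k - 2 - 2*m : ℕ) : ℝ) : ℂ)))‖
      ≤ ‖∑' i : ℕ, f (i + (M+1))‖
        + ‖∑ m ∈ Finset.range (M+1),
            f m * (1 - ((L ((k - 2 - 2*m : ℕ) : ℝ) : ℂ)))‖ := by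
        have hh := norm_add_le (∑' i : ℕ, f (i + (M+1)))
          (∑ m ∈ Finset.range (M+1), f m * (1 - ((L ((k - 2 - 2*m : ℕ) : ℝ) : ℂ))))
        exact hh
    _ ≤ (1/4:ℝ)^(M+1) * ((1/2) * Real.exp 16) + (1/4:ℝ)^M * ((1/2) * Real.exp 16) := by
        linarith [htail, hsumbd]
    _ ≤ (1/4:ℝ)^18 * ((1/2) * Real.exp 16) + (1/4:ℝ)^18 * ((1/2) * Real.exp 16) := by
        have hC : (0:ℝ) ≤ (1/2) * Real.exp 16 := by positivity
        have := mul_le_mul_of_nonneg_right hM14 hC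
        have := mul_le_mul_of_nonneg_right hM14' hC
        linarith
    _ = (1/4:ℝ)^18 * Real.exp 16 := by ring
    _ ≤ (1/4:ℝ)^18 * 43046721 := by
        apply mul_le_mul_of_nonneg_left hexp16 (by positivity)
    _ ≤ 1 / 100 := by norm_num
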